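/- For a product measure μ = μ₁ ⊗ μ₂ on ℝ² with all moments finite and invertible truncated moment matrix M_d (indexed by monomials x^i y^j, i+j ≤ d), the inverse M_d^{-1} satisfies the zeros in the inverse condition: the entry indexed by monomials x^{a1}y^{a2} and x^{b1}y^{b2} vanishes whenever max(a1,b1) + max(a2,b2) > d. -/

import Mathlib

open MeasureTheory

namespace ProdZerosAux

open Matrix Finset

lemma sq_expand {n : ℕ} (x : Fin n → ℝ) (t : ℝ) :
    (∑ i : Fin n, x i * t ^ (i : ℕ)) ^ 2
      = ∑ i : Fin n, ∑ j : Fin n, x i * x j * t ^ ((i : ℕ) + (j : ℕ)) := by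
  rw [sq, Finset.sum_mul_sum]
  refine Finset.sum_congr rfl fun i _ => Finset.sum_congr rfl fun j _ => ?_
  rw [pow_add]; ring

lemma integrable_sq {n : ℕ} {ν : Measure ℝ}
    (hm : ∀ k : ℕ, Integrable (fun t : ℝ => t ^ k) ν) (x : Fin n → ℝ) :
    Integrable (fun t : ℝ => (∑ i : Fin n, x i * t ^ (i : ℕ)) ^ 2) ν := by
  have h : (fun t : ℝ => (∑ i : Fin n, x i * t ^ (i : ℕ)) ^ 2)
      = fun t : ℝ => ∑ i : Fin n, ∑ j : Fin n, x i * x j * t ^ ((i : ℕ) + (j : ℕ)) :=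
    funext fun t => sq_expand x t
  rw [h]
  exact integrable_finset_sum _ fun i _ =>
    integrable_finset_sum _ fun j _ => ((hm _).const_mul _)

lemma quad_eq_integral {n : ℕ} {ν : Measure ℝ}
    (hm : ∀ k : ℕ, Integrable (fun t : ℝ => t ^ k) ν) (x : Fin n → ℝ) :
    ∑ i : Fin n, ∑ j : Fin n, x i * x j * (∫ t, t ^ ((i : ℕ) + (j : ℕ)) ∂ν)
      = ∫ t, (∑ i : Fin n, x i * t ^ (i : ℕ)) ^ 2 ∂ν := by
  simp_rw [sq_expand x]
  rw [integral_finset_sum _ fun i _ =>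
    integrable_finset_sum _ fun j _ => ((hm _).const_mul _)]
  refine Finset.sum_congr rfl fun i _ => ?_
  rw [integral_finset_sum _ fun j _ => ((hm _).const_mul _)]
  refine Finset.sum_congr rfl fun j _ => ?_
  rw [MeasureTheory.integral_const_mul]

lemma ae_zero_of_quad_eq_zero {n : ℕ} {ν : Measure ℝ}
    (hm : ∀ k : ℕ, Integrable (fun t : ℝ => t ^ k) ν) (x : Fin n → ℝ)
    (h : ∑ i : Fin n, ∑ j : Fin n, x i * x j * (∫ t, t ^ ((i : ℕ) + (j : ℕ)) ∂ν) = 0) :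
    (fun t : ℝ => ∑ i : Fin n, x i * t ^ (i : ℕ)) =ᵐ[ν] 0 := by
  rw [quad_eq_integral hm x] at h
  have h2 := (integral_eq_zero_iff_of_nonneg (fun t => sq_nonneg _) (integrable_sq hm x)).1 h
  filter_upwards [h2] with t ht
  have ht' : (∑ i : Fin n, x i * t ^ (i : ℕ)) ^ 2 = 0 := ht
  simpa using (pow_eq_zero_iff two_ne_zero).1 ht'

lemma hankel_posDef {n : ℕ} {ν : Measure ℝ} [IsFiniteMeasure ν]
    (hm : ∀ k : ℕ, Integrable (fun t : ℝ => t ^ k) ν)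
    {H : Matrix (Fin n) (Fin n) ℝ}
    (hH : ∀ i j, H i j = ∫ t, t ^ ((i : ℕ) + (j : ℕ)) ∂ν)
    (hker : ∀ x : Fin n → ℝ, H *ᵥ x = 0 → x = 0) : H.PosDef := by
  have hq : ∀ x : Fin n → ℝ, dotProduct x (H *ᵥ x)
      = ∑ i : Fin n, ∑ j : Fin n, x i * x j * (∫ t, t ^ ((i : ℕ) + (j : ℕ)) ∂ν) := by
    intro x
    simp only [dotProduct, mulVec, Finset.mul_sum]
    exact Finset.sum_congr rfl fun i _ => Finset.sum_congr rfl fun j _ => by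
      rw [hH]; ring
  rw [posDef_iff_dotProduct_mulVec]
  constructor
  · ext i j
    rw [conjTranspose_apply, star_trivial, hH, hH, Nat.add_comm]
  · intro x hx
    have hsx : star x = x := funext fun i => star_trivial _
    rw [hsx]
    have hnn : 0 ≤ dotProduct x (H *ᵥ x) := by
      rw [hq, quad_eq_integral hm x]
      exact integral_nonneg fun t => sq_nonneg _
    rcases hnn.lt_or_eq with h | h
    · exact h
    · exfalso
      have hquad : ∑ i : Fin n, ∑ j : Fin n,
          x i * x j * (∫ t, t ^ ((i : ℕ) + (j : ℕ)) ∂ν) = 0 := by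
        rw [← hq]; exact h.symm
      have hf := ae_zero_of_quad_eq_zero hm x hquad
      have hHx : H *ᵥ x = 0 := by
        funext i
        have hae : (fun t : ℝ => t ^ (i : ℕ) * ∑ j : Fin n, x j * t ^ (j : ℕ)) =ᵐ[ν] 0 := by
          filter_upwards [hf] with t ht
          have ht' : (∑ j : Fin n, x j * t ^ (j : ℕ)) = 0 := ht
          simp [ht']
        calc (H *ᵥ x) i = ∑ j : Fin n, (∫ t, t ^ ((i : ℕ) + (j : ℕ)) ∂ν) * x j := by
              simp only [mulVec, dotProduct]
              exact Finset.sum_congr rfl fun j _ => by rw [hH]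
          _ = ∑ j : Fin n, ∫ t, t ^ ((i : ℕ) + (j : ℕ)) * x j ∂ν := by
              exact Finset.sum_congr rfl fun j _ => (integral_mul_const (x j) _).symm
          _ = ∫ t, ∑ j : Fin n, t ^ ((i : ℕ) + (j : ℕ)) * x j ∂ν :=
              (integral_finset_sum _ fun j _ => (hm _).mul_const _).symm
          _ = ∫ t, t ^ (i : ℕ) * ∑ j : Fin n, x j * t ^ (j : ℕ) ∂ν := by
              congr 1; funext t
              rw [Finset.mul_sum]
              exact Finset.sum_congr rfl fun j _ => by rw [pow_add]; ring
          _ = 0 := integral_eq_zero_of_ae hae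
      exact hx (hker x hHx)

abbrev Idx (d : ℕ) := {p : Fin (d + 1) × Fin (d + 1) // (p.1 : ℕ) + (p.2 : ℕ) ≤ d}

lemma sum_staircase (d : ℕ) (F : Fin (d + 1) × Fin (d + 1) → ℝ)
    (hF : ∀ p : Fin (d + 1) × Fin (d + 1), d < (p.1 : ℕ) + (p.2 : ℕ) → F p = 0) :
    ∑ α : {p : Fin (d + 1) × Fin (d + 1) // (p.1 : ℕ) + (p.2 : ℕ) ≤ d}, F α.1
      = ∑ p : Fin (d + 1) × Fin (d + 1), F p := by
  classical
  calc ∑ α : {p : Fin (d + 1) × Fin (d + 1) // (p.1 : ℕ) + (p.2 : ℕ) ≤ d}, F α.1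
      = ∑ p ∈ Finset.univ.filter
          (fun p : Fin (d + 1) × Fin (d + 1) => (p.1 : ℕ) + (p.2 : ℕ) ≤ d), F p :=
        (Finset.sum_subtype _ (fun p => by simp) F).symm
    _ = ∑ p : Fin (d + 1) × Fin (d + 1), F p :=
        Finset.sum_filter_of_ne fun p _ hne => by
          by_contra hc
          exact hne (hF p (lt_of_not_ge hc))

end ProdZerosAux

open ProdZerosAux Matrix

theorem product_measure_zeros_in_inverse (d : ℕ)
    (μ₁ μ₂ : Measure ℝ) [IsFiniteMeasure μ₁] [IsFiniteMeasure μ₂]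
    (hm₁ : ∀ n : ℕ, Integrable (fun x : ℝ => x ^ n) μ₁)
    (hm₂ : ∀ n : ℕ, Integrable (fun x : ℝ => x ^ n) μ₂)
    (M : Matrix {p : Fin (d + 1) × Fin (d + 1) // (p.1 : ℕ) + (p.2 : ℕ) ≤ d}
                {p : Fin (d + 1) × Fin (d + 1) // (p.1 : ℕ) + (p.2 : ℕ) ≤ d} ℝ)
    (hM : ∀ a b, M a b =
      ∫ z : ℝ × ℝ, z.1 ^ ((a.1.1 : ℕ) + (b.1.1 : ℕ)) * z.2 ^ ((a.1.2 : ℕ) + (b.1.2 : ℕ))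
        ∂(μ₁.prod μ₂))
    (hinv : IsUnit M) :
    ∀ a b, d < max (a.1.1 : ℕ) (b.1.1 : ℕ) + max (a.1.2 : ℕ) (b.1.2 : ℕ) →
      M⁻¹ a b = 0 := by
  -- the 1D Hankel matrices
  set H₁ : Matrix (Fin (d + 1)) (Fin (d + 1)) ℝ :=
    fun i j => ∫ t, t ^ ((i : ℕ) + (j : ℕ)) ∂μ₁ with hH₁
  set H₂ : Matrix (Fin (d + 1)) (Fin (d + 1)) ℝ :=
    fun i j => ∫ t, t ^ ((i : ℕ) + (j : ℕ)) ∂μ₂ with hH₂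
  have hfac : ∀ a b : Idx d, M a b = H₁ a.1.1 b.1.1 * H₂ a.1.2 b.1.2 := by
    intro a b
    rw [hM]
    exact integral_prod_mul (μ := μ₁) (ν := μ₂)
      (f := fun t : ℝ => t ^ ((a.1.1 : ℕ) + (b.1.1 : ℕ)))
      (g := fun t : ℝ => t ^ ((a.1.2 : ℕ) + (b.1.2 : ℕ)))
  have hMc : Function.Injective M.mulVec := Matrix.mulVec_injective_iff_isUnit.2 hinv
  -- kernel triviality for H₁
  have hker₁ : ∀ x : Fin (d + 1) → ℝ, H₁ *ᵥ x = 0 → x = 0 := by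
    intro x hx
    have hquad : ∑ i : Fin (d + 1), ∑ j : Fin (d + 1),
        x i * x j * (∫ t, t ^ ((i : ℕ) + (j : ℕ)) ∂μ₁) = 0 := by
      have : dotProduct x (H₁ *ᵥ x) = 0 := by rw [hx, dotProduct_zero]
      rw [← this]
      simp only [dotProduct, mulVec, Finset.mul_sum]
      exact Finset.sum_congr rfl fun i _ => Finset.sum_congr rfl fun j _ => by ring
    have hf := ae_zero_of_quad_eq_zero hm₁ x hquad
    -- transfer to the product measure
    have hfprod : (fun z : ℝ × ℝ => ∑ i : Fin (d + 1), x i * z.1 ^ (i : ℕ))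
        =ᵐ[μ₁.prod μ₂] 0 :=
      MeasureTheory.Measure.quasiMeasurePreserving_fst.ae_eq hf
    -- build the staircase vector
    set e : Fin (d + 1) → Idx d := fun i => ⟨(i, 0), by simpa using i.is_le⟩ with he
    set c : Idx d → ℝ := fun a => if a.1.2 = 0 then x a.1.1 else 0 with hc
    have hMc0 : M *ᵥ c = 0 := by
      funext b
      have hsum : (M *ᵥ c) b = ∑ i : Fin (d + 1), M b (e i) * x i := by
        rw [mulVec, dotProduct]
        rw [← Finset.sum_subset (Finset.subset_univ (Finset.univ.image e))]
        · rw [Finset.sum_image (fun i _ j _ hij => by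
            simpa [he, Subtype.ext_iff, Prod.ext_iff] using hij)]
          refine Finset.sum_congr rfl fun i _ => ?_
          simp [hc, he]
        · intro a _ ha
          have h2 : ¬ a.1.2 = 0 := by
            intro h0
            exact ha (Finset.mem_image.2 ⟨a.1.1, Finset.mem_univ _, by
              simp [he, Subtype.ext_iff, Prod.ext_iff, h0.symm]⟩)
          simp [hc, h2]
      rw [hsum]
      have hMe : ∀ i : Fin (d + 1), M b (e i)
          = ∫ z : ℝ × ℝ, z.1 ^ ((b.1.1 : ℕ) + (i : ℕ)) * z.2 ^ ((b.1.2 : ℕ)) ∂(μ₁.prod μ₂) := by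
        intro i
        rw [hM]
        simp [he]
      calc ∑ i : Fin (d + 1), M b (e i) * x i
          = ∑ i : Fin (d + 1), ∫ z : ℝ × ℝ,
              (z.1 ^ ((b.1.1 : ℕ) + (i : ℕ)) * z.2 ^ ((b.1.2 : ℕ))) * x i ∂(μ₁.prod μ₂) := by
            refine Finset.sum_congr rfl fun i _ => ?_
            rw [hMe i, integral_mul_const]
        _ = ∫ z : ℝ × ℝ, ∑ i : Fin (d + 1),
              (z.1 ^ ((b.1.1 : ℕ) + (i : ℕ)) * z.2 ^ ((b.1.2 : ℕ))) * x i ∂(μ₁.prod μ₂) :=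
            (integral_finset_sum _ fun i _ =>
              (((hm₁ _).mul_prod (hm₂ _))).mul_const _).symm
        _ = ∫ z : ℝ × ℝ, (z.1 ^ ((b.1.1 : ℕ)) * z.2 ^ ((b.1.2 : ℕ)))
              * ∑ i : Fin (d + 1), x i * z.1 ^ (i : ℕ) ∂(μ₁.prod μ₂) := by
            congr 1; funext z
            rw [Finset.mul_sum]
            exact Finset.sum_congr rfl fun i _ => by rw [pow_add]; ring
        _ = 0 := by
            refine integral_eq_zero_of_ae ?_
            filter_upwards [hfprod] with z hz
            have hz' : (∑ i : Fin (d + 1), x i * z.1 ^ (i : ℕ)) = 0 := hz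
            simp [hz']
    have hc0 : c = 0 := by
      apply hMc
      rw [hMc0, Matrix.mulVec_zero]
    funext i
    have := congrFun hc0 (e i)
    simpa [hc, he] using this
  -- kernel triviality for H₂
  have hker₂ : ∀ x : Fin (d + 1) → ℝ, H₂ *ᵥ x = 0 → x = 0 := by
    intro x hx
    have hquad : ∑ i : Fin (d + 1), ∑ j : Fin (d + 1),
        x i * x j * (∫ t, t ^ ((i : ℕ) + (j : ℕ)) ∂μ₂) = 0 := by
      have : dotProduct x (H₂ *ᵥ x) = 0 := by rw [hx, dotProduct_zero]
      rw [← this]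
      simp only [dotProduct, mulVec, Finset.mul_sum]
      exact Finset.sum_congr rfl fun i _ => Finset.sum_congr rfl fun j _ => by ring
    have hf := ae_zero_of_quad_eq_zero hm₂ x hquad
    have hfprod : (fun z : ℝ × ℝ => ∑ i : Fin (d + 1), x i * z.2 ^ (i : ℕ))
        =ᵐ[μ₁.prod μ₂] 0 :=
      MeasureTheory.Measure.quasiMeasurePreserving_snd.ae_eq hf
    set e : Fin (d + 1) → Idx d := fun j => ⟨(0, j), by simpa using j.is_le⟩ with he
    set c : Idx d → ℝ := fun a => if a.1.1 = 0 then x a.1.2 else 0 with hc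
    have hMc0 : M *ᵥ c = 0 := by
      funext b
      have hsum : (M *ᵥ c) b = ∑ j : Fin (d + 1), M b (e j) * x j := by
        rw [mulVec, dotProduct]
        rw [← Finset.sum_subset (Finset.subset_univ (Finset.univ.image e))]
        · rw [Finset.sum_image (fun i _ j _ hij => by
            simpa [he, Subtype.ext_iff, Prod.ext_iff] using hij)]
          refine Finset.sum_congr rfl fun j _ => ?_
          simp [hc, he]
        · intro a _ ha
          have h2 : ¬ a.1.1 = 0 := by
            intro h0
            exact ha (Finset.mem_image.2 ⟨a.1.2, Finset.mem_univ _, by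
              simp [he, Subtype.ext_iff, Prod.ext_iff, h0.symm]⟩)
          simp [hc, h2]
      rw [hsum]
      have hMe : ∀ j : Fin (d + 1), M b (e j)
          = ∫ z : ℝ × ℝ, z.1 ^ ((b.1.1 : ℕ)) * z.2 ^ ((b.1.2 : ℕ) + (j : ℕ)) ∂(μ₁.prod μ₂) := by
        intro j
        rw [hM]
        simp [he]
      calc ∑ j : Fin (d + 1), M b (e j) * x j
          = ∑ j : Fin (d + 1), ∫ z : ℝ × ℝ,
              (z.1 ^ ((b.1.1 : ℕ)) * z.2 ^ ((b.1.2 : ℕ) + (j : ℕ))) * x j ∂(μ₁.prod μ₂) := by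
            refine Finset.sum_congr rfl fun j _ => ?_
            rw [hMe j, integral_mul_const]
        _ = ∫ z : ℝ × ℝ, ∑ j : Fin (d + 1),
              (z.1 ^ ((b.1.1 : ℕ)) * z.2 ^ ((b.1.2 : ℕ) + (j : ℕ))) * x j ∂(μ₁.prod μ₂) :=
            (integral_finset_sum _ fun j _ =>
              (((hm₁ _).mul_prod (hm₂ _))).mul_const _).symm
        _ = ∫ z : ℝ × ℝ, (z.1 ^ ((b.1.1 : ℕ)) * z.2 ^ ((b.1.2 : ℕ)))
              * ∑ j : Fin (d + 1), x j * z.2 ^ (j : ℕ) ∂(μ₁.prod μ₂) := by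
            congr 1; funext z
            rw [Finset.mul_sum]
            exact Finset.sum_congr rfl fun j _ => by rw [pow_add]; ring
        _ = 0 := by
            refine integral_eq_zero_of_ae ?_
            filter_upwards [hfprod] with z hz
            have hz' : (∑ j : Fin (d + 1), x j * z.2 ^ (j : ℕ)) = 0 := hz
            simp [hz']
    have hc0 : c = 0 := by
      apply hMc
      rw [hMc0, Matrix.mulVec_zero]
    funext j
    have := congrFun hc0 (e j)
    simpa [hc, he] using this
  have hPD₁ : H₁.PosDef := hankel_posDef hm₁ (fun i j => rfl) hker₁
  have hPD₂ : H₂.PosDef := hankel_posDef hm₂ (fun i j => rfl) hker₂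
  -- LDL decompositions
  haveI : WellFoundedLT (Fin (d + 1)) := inferInstance
  set K₁ := LDL.lowerInv hPD₁ with hK₁def
  set K₂ := LDL.lowerInv hPD₂ with hK₂def
  set D₁ := LDL.diagEntries hPD₁ with hD₁def
  set D₂ := LDL.diagEntries hPD₂ with hD₂def
  haveI : Invertible K₁ := by rw [hK₁def]; convert LDL.invertibleLowerInv hPD₁
  haveI : Invertible K₂ := by rw [hK₂def]; convert LDL.invertibleLowerInv hPD₂
  set L₁ := K₁⁻¹ with hL₁def
  set L₂ := K₂⁻¹ with hL₂def
  have hK₁tri : ∀ i j : Fin (d + 1), i < j → K₁ i j = 0 :=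
    fun i j h => LDL.lowerInv_triangular hPD₁ h
  have hK₂tri : ∀ i j : Fin (d + 1), i < j → K₂ i j = 0 :=
    fun i j h => LDL.lowerInv_triangular hPD₂ h
  have hL₁tri : ∀ i j : Fin (d + 1), i < j → L₁ i j = 0 := by
    have hbt : K₁.BlockTriangular (OrderDual.toDual : Fin (d + 1) → (Fin (d + 1))ᵒᵈ) :=
      fun i j h => hK₁tri i j h
    have := Matrix.blockTriangular_inv_of_blockTriangular hbt
    exact fun i j h => this h
  have hL₂tri : ∀ i j : Fin (d + 1), i < j → L₂ i j = 0 := by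
    have hbt : K₂.BlockTriangular (OrderDual.toDual : Fin (d + 1) → (Fin (d + 1))ᵒᵈ) :=
      fun i j h => hK₂tri i j h
    have := Matrix.blockTriangular_inv_of_blockTriangular hbt
    exact fun i j h => this h
  have hLK₁ : L₁ * K₁ = 1 := Matrix.inv_mul_of_invertible K₁
  have hLK₂ : L₂ * K₂ = 1 := Matrix.inv_mul_of_invertible K₂
  have hDiag₁ : (Matrix.diagonal D₁ : Matrix (Fin (d + 1)) (Fin (d + 1)) ℝ)
      = K₁ * H₁ * K₁ᵀ := by
    rw [hK₁def, hD₁def, ← Matrix.conjTranspose_eq_transpose_of_trivial,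
      ← LDL.diag_eq_lowerInv_conj hPD₁]
    ext i j
    by_cases h : i = j <;> simp [LDL.diag, Matrix.diagonal_apply, h]
  have hDiag₂ : (Matrix.diagonal D₂ : Matrix (Fin (d + 1)) (Fin (d + 1)) ℝ)
      = K₂ * H₂ * K₂ᵀ := by
    rw [hK₂def, hD₂def, ← Matrix.conjTranspose_eq_transpose_of_trivial,
      ← LDL.diag_eq_lowerInv_conj hPD₂]
    ext i j
    by_cases h : i = j <;> simp [LDL.diag, Matrix.diagonal_apply, h]
  have hfull₁ : L₁ * Matrix.diagonal D₁ * L₁ᵀ = H₁ := by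
    rw [hDiag₁]
    calc L₁ * (K₁ * H₁ * K₁ᵀ) * L₁ᵀ = (L₁ * K₁) * H₁ * (K₁ᵀ * L₁ᵀ) := by
          simp only [Matrix.mul_assoc]
      _ = H₁ := by
          rw [← Matrix.transpose_mul, hLK₁, Matrix.transpose_one, Matrix.one_mul,
            Matrix.mul_one]
  have hfull₂ : L₂ * Matrix.diagonal D₂ * L₂ᵀ = H₂ := by
    rw [hDiag₂]
    calc L₂ * (K₂ * H₂ * K₂ᵀ) * L₂ᵀ = (L₂ * K₂) * H₂ * (K₂ᵀ * L₂ᵀ) := by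
          simp only [Matrix.mul_assoc]
      _ = H₂ := by
          rw [← Matrix.transpose_mul, hLK₂, Matrix.transpose_one, Matrix.one_mul,
            Matrix.mul_one]
  have hHdec₁ : ∀ i j : Fin (d + 1),
      H₁ i j = ∑ k : Fin (d + 1), L₁ i k * D₁ k * L₁ j k := by
    intro i j
    conv_lhs => rw [← hfull₁]
    rw [Matrix.mul_apply]
    refine Finset.sum_congr rfl fun k _ => ?_
    rw [Matrix.mul_diagonal, Matrix.transpose_apply]
  have hHdec₂ : ∀ i j : Fin (d + 1),
      H₂ i j = ∑ k : Fin (d + 1), L₂ i k * D₂ k * L₂ j k := by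
    intro i j
    conv_lhs => rw [← hfull₂]
    rw [Matrix.mul_apply]
    refine Finset.sum_congr rfl fun k _ => ?_
    rw [Matrix.mul_diagonal, Matrix.transpose_apply]
  -- the staircase matrices
  set U : Matrix (Idx d) (Idx d) ℝ := fun a α => L₁ a.1.1 α.1.1 * L₂ a.1.2 α.1.2 with hU
  set V : Matrix (Idx d) (Idx d) ℝ := fun α b => K₁ α.1.1 b.1.1 * K₂ α.1.2 b.1.2 with hV
  set w : Idx d → ℝ := fun α => D₁ α.1.1 * D₂ α.1.2 with hw
  set N : Matrix (Idx d) (Idx d) ℝ := Matrix.diagonal w with hN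
  have hUV : U * V = 1 := by
    ext a b
    rw [Matrix.mul_apply]
    have hvan : ∀ p : Fin (d + 1) × Fin (d + 1), d < (p.1 : ℕ) + (p.2 : ℕ) →
        (L₁ a.1.1 p.1 * L₂ a.1.2 p.2) * (K₁ p.1 b.1.1 * K₂ p.2 b.1.2) = 0 := by
      intro p hp
      rcases lt_or_ge (a.1.1 : ℕ) (p.1 : ℕ) with h | h
      · rw [hL₁tri a.1.1 p.1 (Fin.lt_def.2 h)]; ring
      · have h2 : (a.1.2 : ℕ) < (p.2 : ℕ) := by have := a.2; omega
        rw [hL₂tri a.1.2 p.2 (Fin.lt_def.2 h2)]; ring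
    have hstep : ∑ α : Idx d, U a α * V α b
        = ∑ p : Fin (d + 1) × Fin (d + 1),
            (L₁ a.1.1 p.1 * L₂ a.1.2 p.2) * (K₁ p.1 b.1.1 * K₂ p.2 b.1.2) := by
      refine (Finset.sum_congr rfl fun α _ => ?_).trans
        (sum_staircase d (fun p => (L₁ a.1.1 p.1 * L₂ a.1.2 p.2)
          * (K₁ p.1 b.1.1 * K₂ p.2 b.1.2)) hvan)
      simp only [hU, hV]
    rw [hstep, Fintype.sum_prod_type]
    have hfact : ∑ i : Fin (d + 1), ∑ j : Fin (d + 1),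
        (L₁ a.1.1 i * L₂ a.1.2 j) * (K₁ i b.1.1 * K₂ j b.1.2)
        = (∑ i : Fin (d + 1), L₁ a.1.1 i * K₁ i b.1.1)
          * (∑ j : Fin (d + 1), L₂ a.1.2 j * K₂ j b.1.2) := by
      rw [Finset.sum_mul_sum]
      exact Finset.sum_congr rfl fun i _ => Finset.sum_congr rfl fun j _ => by ring
    rw [hfact]
    have h1 : ∑ i : Fin (d + 1), L₁ a.1.1 i * K₁ i b.1.1 = (1 : Matrix _ _ ℝ) a.1.1 b.1.1 := by
      rw [← hLK₁, Matrix.mul_apply]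
    have h2 : ∑ j : Fin (d + 1), L₂ a.1.2 j * K₂ j b.1.2 = (1 : Matrix _ _ ℝ) a.1.2 b.1.2 := by
      rw [← hLK₂, Matrix.mul_apply]
    rw [h1, h2]
    by_cases hab : a = b
    · subst hab; simp
    · have hne : ¬ (a.1.1 = b.1.1 ∧ a.1.2 = b.1.2) := by
        intro ⟨u1, u2⟩
        exact hab (Subtype.ext (Prod.ext u1 u2))
      rcases not_and_or.1 hne with h | h
      · simp [Matrix.one_apply, h, hab]
      · simp [Matrix.one_apply, h, hab]
  have hVU : V * U = 1 := mul_eq_one_comm.1 hUV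
  have hMdec : M = U * N * Uᵀ := by
    ext a b
    rw [hfac a b, hHdec₁, hHdec₂]
    rw [Matrix.mul_apply]
    have hvan : ∀ p : Fin (d + 1) × Fin (d + 1), d < (p.1 : ℕ) + (p.2 : ℕ) →
        ((L₁ a.1.1 p.1 * L₂ a.1.2 p.2) * (D₁ p.1 * D₂ p.2))
          * (L₁ b.1.1 p.1 * L₂ b.1.2 p.2) = 0 := by
      intro p hp
      rcases lt_or_ge (a.1.1 : ℕ) (p.1 : ℕ) with h | h
      · rw [hL₁tri a.1.1 p.1 (Fin.lt_def.2 h)]; ring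
      · have h2 : (a.1.2 : ℕ) < (p.2 : ℕ) := by have := a.2; omega
        rw [hL₂tri a.1.2 p.2 (Fin.lt_def.2 h2)]; ring
    have hstep : ∑ α : Idx d, (U * N) a α * Uᵀ α b
        = ∑ p : Fin (d + 1) × Fin (d + 1),
            ((L₁ a.1.1 p.1 * L₂ a.1.2 p.2) * (D₁ p.1 * D₂ p.2))
              * (L₁ b.1.1 p.1 * L₂ b.1.2 p.2) := by
      refine (Finset.sum_congr rfl fun α _ => ?_).trans
        (sum_staircase d (fun p => ((L₁ a.1.1 p.1 * L₂ a.1.2 p.2) * (D₁ p.1 * D₂ p.2))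
          * (L₁ b.1.1 p.1 * L₂ b.1.2 p.2)) hvan)
      rw [Matrix.transpose_apply, hN, Matrix.mul_diagonal]
    rw [hstep, Fintype.sum_prod_type]
    rw [Finset.sum_mul_sum (f := fun i => L₁ a.1.1 i * D₁ i * L₁ b.1.1 i)
      (g := fun j => L₂ a.1.2 j * D₂ j * L₂ b.1.2 j)]
    exact (Finset.sum_congr rfl fun i _ => Finset.sum_congr rfl fun j _ => by ring).symm
  have hVunit : IsUnit V := by
    have : Invertible V := invertibleOfRightInverse V U hVU
    exact isUnit_of_invertible V
  have hUinv : U⁻¹ = V := Matrix.inv_eq_right_inv hUV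
  have hMinv : M⁻¹ = Vᵀ * N⁻¹ * V := by
    rw [hMdec, Matrix.mul_inv_rev, Matrix.mul_inv_rev]
    rw [← Matrix.transpose_nonsing_inv, hUinv, Matrix.mul_assoc]
  -- conclusion
  intro a b hab
  rw [hMinv, Matrix.mul_assoc, Matrix.mul_apply]
  refine Finset.sum_eq_zero fun α _ => ?_
  by_cases h1 : V α a = 0
  · rw [Matrix.transpose_apply, h1, zero_mul]
  by_cases h2 : V α b = 0
  · have : (N⁻¹ * V) α b = 0 := by
      rw [hN, Matrix.inv_diagonal, Matrix.diagonal_mul, h2, mul_zero]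
    rw [this, mul_zero]
  exfalso
  simp only [hV] at h1 h2
  have ha1 : (a.1.1 : ℕ) ≤ (α.1.1 : ℕ) := by
    by_contra h
    exact h1 (by rw [hK₁tri α.1.1 a.1.1 (Fin.lt_def.2 (lt_of_not_ge h)), zero_mul])
  have ha2 : (a.1.2 : ℕ) ≤ (α.1.2 : ℕ) := by
    by_contra h
    exact h1 (by rw [hK₂tri α.1.2 a.1.2 (Fin.lt_def.2 (lt_of_not_ge h)), mul_zero])
  have hb1 : (b.1.1 : ℕ) ≤ (α.1.1 : ℕ) := by
    by_contra h
    exact h2 (by rw [hK₁tri α.1.1 b.1.1 (Fin.lt_def.2 (lt_of_not_ge h)), zero_mul])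
  have hb2 : (b.1.2 : ℕ) ≤ (α.1.2 : ℕ) := by
    by_contra h
    exact h2 (by rw [hK₂tri α.1.2 b.1.2 (Fin.lt_def.2 (lt_of_not_ge h)), mul_zero])
  have := α.2
  omega
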